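/- arXiv:2203.02775 — 4 statements merged into one kernel-verified Lean document; each statement's English description precedes it below -/
import Mathlib

section
/- Let Φ be a finite reduced crystallographic root system in a finite-dimensional real vector space V, with a fixed system of positive roots Φ⁺, negative roots Φ⁻ = −Φ⁺, and Weyl group W. Let ρ = (1/2)·∑_{α∈Φ⁺} α, and let the dot action of W on V be w·v = w(v+ρ) − ρ. If σ ∈ V is a sum of distinct negative roots, i.e. σ = −∑_{α∈S} α for some subset S ⊆ Φ⁺ (possibly empty), then for every w ∈ W the element w·σ is also a sum of distinct negative roots. -/
/-!
STATEMENT 0: Let Φ be a finite reduced crystallographic root system in a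
finite-dimensional real vector space V, with a fixed system of positive roots
Φ⁺ (cut out by a linear functional `f` not vanishing on any root), negative
roots Φ⁻ = −Φ⁺, and Weyl group W.  Let ρ = (1/2)·∑_{α∈Φ⁺} α and let the dot
action of W on V be w·v = w(v+ρ) − ρ.  If σ ∈ V is a sum of distinct negative
roots, i.e. σ = −∑_{α∈S} α for some subset S ⊆ Φ⁺ (possibly empty), then for
every w ∈ W the element w·σ is also a sum of distinct negative roots.

The root system is encoded, following Mathlib, as a `RootSystem ι ℝ V V'` with
finitely many roots (`Fintype ι`); positive roots are given by the finite set
`Pos` of their indices (roots being injectively indexed by `ι`).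
-/

theorem dot_action_of_sum_of_distinct_negative_roots
    {ι V V' : Type*} [Fintype ι]
    [AddCommGroup V] [Module ℝ V] [FiniteDimensional ℝ V]
    [AddCommGroup V'] [Module ℝ V']
    (P : RootPairing ι ℝ V V') [P.IsRootSystem]
    (hcrys : P.IsCrystallographic)
    (hred : P.IsReduced)
    -- `Pos` is a positive system: the roots on which a fixed regular linear
    -- functional `f` (nonvanishing on all roots) is positive
    (f : V →ₗ[ℝ] ℝ) (hf : ∀ i, f (P.root i) ≠ 0)
    (Pos : Finset ι) (hPos : ∀ i, i ∈ Pos ↔ 0 < f (P.root i))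
    -- ρ is the half-sum of the positive roots
    (ρ : V) (hρ : ρ = (2⁻¹ : ℝ) • ∑ i ∈ Pos, P.root i)
    -- σ is a sum of distinct negative roots
    (σ : V) (hσ : ∃ S ⊆ Pos, σ = -∑ i ∈ S, P.root i)
    -- w is an element of the Weyl group
    (w : V ≃ₗ[ℝ] V) (hw : w ∈ Subgroup.closure (Set.range P.reflection)) :
    -- then w·σ = w(σ+ρ) − ρ is a sum of distinct negative roots
    ∃ S ⊆ Pos, w (σ + ρ) - ρ = -∑ i ∈ S, P.root i := by
  classical
  obtain ⟨S, hS, rfl⟩ := hσ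
  set Q := P
  -- the permutation of roots induced by w
  have hk' : ∀ i, ∃ j, Q.root j = w (Q.root i) := by
    induction hw using Subgroup.closure_induction with
    | mem x hx =>
      obtain ⟨k, rfl⟩ := hx
      intro i
      exact ⟨Q.reflectionPerm k i, Q.root_reflectionPerm k i⟩
    | one => intro i; exact ⟨i, rfl⟩
    | mul x y _ _ hx hy =>
      intro i
      obtain ⟨j, hj⟩ := hy i
      obtain ⟨l, hl⟩ := hx j
      exact ⟨l, hl.trans (congrArg x hj)⟩
    | inv x _ hx =>
      choose g hg using hx
      have ginj : Function.Injective g := fun a b hab =>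
        Q.root.injective (x.injective (by rw [← hg, ← hg, hab]))
      intro i
      obtain ⟨j, rfl⟩ := (Finite.injective_iff_surjective.mp ginj) i
      refine ⟨j, ?_⟩
      rw [hg]
      exact (x.symm_apply_apply _).symm
  choose k hk using hk'
  -- negation on indices
  have hn : ∀ j, Q.root (Q.reflectionPerm j j) = -Q.root j := by
    intro j
    rw [Q.root_reflectionPerm, Q.reflection_apply_self]
  -- h sends a positive index to the positive version of its image under w
  set h : ι → ι := fun i => if k i ∈ Pos then k i else Q.reflectionPerm (k i) (k i) with hh
  have hhPos : ∀ i, h i ∈ Pos := by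
    intro i
    by_cases hki : k i ∈ Pos
    · simpa [hh, hki]
    · have h1 : ¬ (0 < f (Q.root (k i))) := fun c => hki ((hPos (k i)).mpr c)
      have h2 : f (Q.root (k i)) ≠ 0 := hf (k i)
      simp only [hh, hki, if_false]
      rw [hPos, hn, map_neg]
      cases (h2.lt_or_gt) with
      | inl hlt => linarith
      | inr hgt => exact absurd hgt h1
  have hsign : ∀ i, w (Q.root i) = Q.root (h i) ∨ w (Q.root i) = -Q.root (h i) := by
    intro i
    by_cases hki : k i ∈ Pos
    · left; rw [hh]; simp only [hki, if_true]; exact (hk i).symm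
    · right; rw [hh]; simp only [hki, if_false, hn, neg_neg]; exact (hk i).symm
  -- h is injective on Pos
  have hinj : Set.InjOn h Pos := by
    intro i hi i' hi' hii'
    have e1 := hsign i
    have e2 := hsign i'
    have key : Q.root i = Q.root i' ∨ Q.root i = -Q.root i' := by
      have : w (Q.root i) = w (Q.root i') ∨ w (Q.root i) = -(w (Q.root i')) := by
        rcases e1 with e1 | e1 <;> rcases e2 with e2 | e2 <;> rw [e1, e2, hii'] <;> simp
      rcases this with h' | h'
      · exact Or.inl (w.injective h')
      · right
        rw [← map_neg] at h'
        have := w.injective h'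
        rw [this]
    rcases key with key | key
    · exact Q.root.injective key
    · exfalso
      have p1 : 0 < f (Q.root i) := (hPos i).mp hi
      have p2 : 0 < f (Q.root i') := (hPos i').mp hi'
      rw [key, map_neg] at p1
      linarith
  -- reindex ρ along h
  have himg : Pos.image h = Pos := by
    apply Finset.eq_of_subset_of_card_le
    · intro j hj
      obtain ⟨i, _, rfl⟩ := Finset.mem_image.mp hj
      exact hhPos i
    · rw [Finset.card_image_of_injOn hinj]
  have hρ' : ρ = ∑ i ∈ Pos, (2⁻¹ : ℝ) • Q.root (h i) := by
    have e := Finset.sum_image (s := Pos) (g := h) (f := fun j => (2⁻¹ : ℝ) • Q.root j)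
      (fun x hx y hy hxy => hinj hx hy hxy)
    rw [himg] at e
    rw [hρ, Finset.smul_sum, ← e]
  -- express σ + ρ as a single sum over Pos
  have hσρ : -∑ i ∈ S, Q.root i + ρ
      = ∑ i ∈ Pos, (if i ∈ S then -(2⁻¹ : ℝ) else (2⁻¹ : ℝ)) • Q.root i := by
    have hSsum : ∑ i ∈ S, Q.root i = ∑ i ∈ Pos, (if i ∈ S then (1:ℝ) else 0) • Q.root i := by
      rw [← Finset.sum_subset hS (fun x _ hx => by simp [hx])]
      exact Finset.sum_congr rfl fun i hi => by simp [hi]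
    rw [hρ, hSsum, Finset.smul_sum, ← Finset.sum_neg_distrib, ← Finset.sum_add_distrib]
    refine Finset.sum_congr rfl (fun i _ => ?_)
    by_cases hiS : i ∈ S
    · simp only [hiS, if_true]
      module
    · simp only [hiS, if_false]
      module
  -- the condition picking out nonzero terms
  set cond : ι → Prop := fun i => (i ∈ S ↔ w (Q.root i) = Q.root (h i)) with hcond
  refine ⟨(Pos.filter cond).image h, ?_, ?_⟩
  · intro j hj
    obtain ⟨i, _, rfl⟩ := Finset.mem_image.mp hj
    exact hhPos i
  · rw [hσρ, map_sum]
    have step : ∀ i ∈ Pos,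
        w ((if i ∈ S then -(2⁻¹ : ℝ) else (2⁻¹ : ℝ)) • Q.root i) - (2⁻¹ : ℝ) • Q.root (h i)
        = if cond i then -Q.root (h i) else 0 := by
      intro i _
      have hne : Q.root (h i) ≠ -Q.root (h i) := by
        intro c
        have h2 : (2:ℝ) • Q.root (h i) = 0 := by
          rw [two_smul]; nth_rewrite 2 [c]; simp
        exact Q.ne_zero (h i) (by simpa using (smul_eq_zero.mp h2).resolve_left (by norm_num))
      rw [map_smul]
      rcases hsign i with hs | hs
      · by_cases hiS : i ∈ S
        · have hc : cond i := by simp [hcond, hiS, hs]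
          rw [if_pos hiS, if_pos hc, hs]
          module
        · have hc : ¬ cond i := by simp [hcond, hiS, hs]
          rw [if_neg hiS, if_neg hc, hs]
          module
      · by_cases hiS : i ∈ S
        · have hc : ¬ cond i := by
            simp only [hcond, hiS, true_iff]
            rw [hs]
            exact fun c => hne c.symm
          rw [if_pos hiS, if_neg hc, hs]
          module
        · have hc : cond i := by
            simp only [hcond, hiS, false_iff]
            rw [hs]
            exact fun c => hne c.symm
          rw [if_neg hiS, if_pos hc, hs]
          module
    calc ∑ i ∈ Pos, w ((if i ∈ S then -(2⁻¹ : ℝ) else (2⁻¹ : ℝ)) • Q.root i) - ρ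
        = ∑ i ∈ Pos, (w ((if i ∈ S then -(2⁻¹:ℝ) else (2⁻¹:ℝ)) • Q.root i)
            - (2⁻¹:ℝ) • Q.root (h i)) := by
          rw [Finset.sum_sub_distrib, ← hρ']
      _ = ∑ i ∈ Pos, (if cond i then -Q.root (h i) else 0) :=
          Finset.sum_congr rfl step
      _ = ∑ i ∈ Pos.filter cond, -Q.root (h i) := (Finset.sum_filter _ _).symm
      _ = -∑ i ∈ (Pos.filter cond).image h, Q.root i := by
          rw [Finset.sum_image (f := fun j => Q.root j)
            (fun x hx y hy hxy => hinj (Finset.filter_subset _ _ hx)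
              (Finset.filter_subset _ _ hy) hxy), Finset.sum_neg_distrib]
end

section
/- Fix n ≥ 1 and work in ℤⁿ with standard basis ε₁,…,ε_n, positive roots ε_i − ε_j for 1 ≤ i < j ≤ n, Weyl group W = S_n acting by permuting coordinates, ρ = (n−1, n−2, …, 1, 0), and dot action w·λ = w(λ+ρ) − ρ. Let N be the set of all sums of distinct negative roots, i.e. all σ = −∑_{(i,j)∈S} (ε_i − ε_j) for sets S of pairs with 1 ≤ i < j ≤ n (including σ = 0 for S = ∅). Then for every permutation w ∈ S_n and every σ ∈ N, the element w·σ belongs to N. -/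
/-!
STATEMENT 2: Fix n ≥ 1 and work in ℤⁿ with standard basis ε₁,…,ε_n, positive
roots ε_i − ε_j for 1 ≤ i < j ≤ n, Weyl group W = S_n acting by permuting
coordinates, ρ = (n−1, n−2, …, 1, 0), and dot action w·λ = w(λ+ρ) − ρ.  Let N
be the set of all sums of distinct negative roots, i.e. all
σ = −∑_{(i,j)∈S} (ε_i − ε_j) for sets S of pairs with 1 ≤ i < j ≤ n (including
σ = 0 for S = ∅).  Then for every permutation w ∈ S_n and every σ ∈ N, the
element w·σ belongs to N.
-/

/-- The standard basis vector ε_i of ℤⁿ. -/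
def eps {n : ℕ} (i : Fin n) : Fin n → ℤ := Pi.single i 1

/-- The action of S_n on ℤⁿ permuting coordinates: (w(λ))_i = λ_{w⁻¹(i)}. -/
def permAct {n : ℕ} (w : Equiv.Perm (Fin n)) (l : Fin n → ℤ) : Fin n → ℤ :=
  fun i => l (w⁻¹ i)

/-- ρ = (n−1, n−2, …, 1, 0). -/
def rho (n : ℕ) : Fin n → ℤ := fun i => (n : ℤ) - 1 - (i : ℤ)

/-- The dot action w·λ = w(λ+ρ) − ρ of S_n on ℤⁿ. -/
def dotAct {n : ℕ} (w : Equiv.Perm (Fin n)) (l : Fin n → ℤ) : Fin n → ℤ :=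
  permAct w (l + rho n) - rho n

/-- The set N of all sums of distinct negative roots:
all σ = −∑_{(i,j)∈S} (ε_i − ε_j) where S is a (possibly empty) set of pairs
(i,j) with i < j. -/
def sumDistinctNegRoots (n : ℕ) : Set (Fin n → ℤ) :=
  {σ | ∃ S : Finset (Fin n × Fin n), (∀ p ∈ S, p.1 < p.2) ∧
    σ = -∑ p ∈ S, (eps p.1 - eps p.2)}

-- auxiliary lemmas
lemma permAct_add {n : ℕ} (w : Equiv.Perm (Fin n)) (a b : Fin n → ℤ) :
    permAct w (a + b) = permAct w a + permAct w b := rfl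

lemma permAct_neg {n : ℕ} (w : Equiv.Perm (Fin n)) (a : Fin n → ℤ) :
    permAct w (-a) = -permAct w a := rfl

lemma permAct_sub {n : ℕ} (w : Equiv.Perm (Fin n)) (a b : Fin n → ℤ) :
    permAct w (a - b) = permAct w a - permAct w b := rfl

lemma permAct_sum {n : ℕ} (w : Equiv.Perm (Fin n)) {α : Type*} (S : Finset α)
    (f : α → Fin n → ℤ) :
    permAct w (∑ p ∈ S, f p) = ∑ p ∈ S, permAct w (f p) := by
  funext i
  simp [permAct, Finset.sum_apply]

lemma permAct_eps {n : ℕ} (w : Equiv.Perm (Fin n)) (j : Fin n) :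
    permAct w (eps j) = eps (w j) := by
  funext i
  simp only [permAct, eps, Pi.single_apply]
  by_cases h : i = w j
  · simp [h]
  · have h2 : w⁻¹ i ≠ j := fun hh => h (by rw [← hh]; simp)
    simp [h]; exact h2

lemma dotAct_eq {n : ℕ} (w : Equiv.Perm (Fin n)) (σ : Fin n → ℤ) :
    dotAct w σ = permAct w σ + (permAct w (rho n) - rho n) := by
  unfold dotAct
  rw [permAct_add]
  abel

lemma dotAct_one {n : ℕ} (σ : Fin n → ℤ) : dotAct 1 σ = σ := by
  funext i; simp [dotAct, permAct]

lemma dotAct_mul {n : ℕ} (x y : Equiv.Perm (Fin n)) (σ : Fin n → ℤ) :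
    dotAct (x * y) σ = dotAct x (dotAct y σ) := by
  unfold dotAct
  rw [sub_add_cancel]
  funext i
  simp [permAct]

lemma swap_rho {n : ℕ} (c s : Fin n) (hcs : (s : ℕ) = (c : ℕ) + 1) :
    permAct (Equiv.swap c s) (rho n) - rho n = eps s - eps c := by
  have hne : c ≠ s := by intro h; rw [h] at hcs; omega
  funext i
  rcases eq_or_ne i c with rfl | hic
  · simp [permAct, rho, eps, Equiv.swap_apply_left, Pi.single_apply, hne, hcs]
  · rcases eq_or_ne i s with rfl | his
    · simp [permAct, rho, eps, Equiv.swap_apply_right, Pi.single_apply, hne.symm, hcs]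
    · simp [permAct, rho, eps, Equiv.swap_apply_of_ne_of_ne hic his,
        Pi.single_apply, hic, his]

lemma swap_lt {n : ℕ} (c s a b : Fin n) (hcs : (s : ℕ) = (c : ℕ) + 1)
    (hab : a < b) (hne : ¬(a = c ∧ b = s)) :
    Equiv.swap c s a < Equiv.swap c s b := by
  have key : ∀ x : Fin n, ((Equiv.swap c s x : Fin n) : ℕ) =
      if x = c then (s : ℕ) else if x = s then (c : ℕ) else (x : ℕ) := by
    intro x
    rw [Equiv.swap_apply_def]
    split_ifs <;> rfl
  rw [Fin.lt_def] at hab ⊢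
  rw [key, key]
  simp only [Fin.ext_iff] at hne
  split_ifs <;> simp_all [Fin.ext_iff] <;> omega

lemma key_swap {n : ℕ} (c s : Fin n) (hcs : (s : ℕ) = (c : ℕ) + 1)
    (σ : Fin n → ℤ) (hσ : σ ∈ sumDistinctNegRoots n) :
    dotAct (Equiv.swap c s) σ ∈ sumDistinctNegRoots n := by
  obtain ⟨S, hS, rfl⟩ := hσ
  have hcls : c < s := by rw [Fin.lt_def]; omega
  set sw := Equiv.swap c s with hsw
  set φ : Fin n × Fin n → Fin n × Fin n := fun p => (sw p.1, sw p.2) with hφ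
  have hφinj : Function.Injective φ :=
    fun p q h => by
      obtain ⟨h1, h2⟩ := Prod.mk.injEq .. ▸ h
      exact Prod.ext (sw.injective h1) (sw.injective h2)
  set F : Fin n × Fin n → Fin n → ℤ := fun p => eps p.1 - eps p.2 with hF
  have hmain : dotAct sw (-∑ p ∈ S, F p) = -(∑ p ∈ S, F (φ p)) - F (c, s) := by
    rw [dotAct_eq, swap_rho c s hcs, permAct_neg, permAct_sum]
    have : ∀ p, permAct sw (F p) = F (φ p) := by
      intro p
      simp [hF, hφ, permAct_sub, permAct_eps]
    simp only [this]
    simp only [hF]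
    abel
  by_cases hmem : (c, s) ∈ S
  · refine ⟨(S.erase (c, s)).image φ, ?_, ?_⟩
    · rintro q hq
      obtain ⟨p, hp, rfl⟩ := Finset.mem_image.mp hq
      have hpS := Finset.mem_of_mem_erase hp
      have hpne := Finset.ne_of_mem_erase hp
      exact swap_lt c s p.1 p.2 hcs (hS p hpS)
        (fun ⟨h1, h2⟩ => hpne (Prod.ext h1 h2))
    · rw [Finset.sum_image (fun p _ q _ h => hφinj h), hmain,
        ← Finset.add_sum_erase S (fun p => F (φ p)) hmem]
      have : F (φ (c, s)) = -F (c, s) := by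
        simp [hF, hφ, hsw, Equiv.swap_apply_left, Equiv.swap_apply_right]
      rw [this]
      abel
  · refine ⟨insert (c, s) (S.image φ), ?_, ?_⟩
    · rintro q hq
      rcases Finset.mem_insert.mp hq with rfl | hq
      · exact hcls
      · obtain ⟨p, hp, rfl⟩ := Finset.mem_image.mp hq
        refine swap_lt c s p.1 p.2 hcs (hS p hp) ?_
        rintro ⟨rfl, rfl⟩
        exact hmem hp
    · have hnotin : (c, s) ∉ S.image φ := by
        intro h
        obtain ⟨p, hp, hpe⟩ := Finset.mem_image.mp h
        have : p = (s, c) := by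
          have := congrArg φ hpe
          have hφφ : ∀ q, φ (φ q) = q := by
            intro q; simp [hφ, hsw, Equiv.swap_apply_self]
          rw [hφφ] at this
          rw [this]
          simp [hφ, hsw, Equiv.swap_apply_left, Equiv.swap_apply_right]
        rw [this] at hp
        exact absurd (hS _ hp) (not_lt.mpr hcls.le)
      rw [Finset.sum_insert hnotin, Finset.sum_image (fun p _ q _ h => hφinj h), hmain]
      simp only [hF, hφ]
      abel

theorem dot_act_mem_sumDistinctNegRoots (n : ℕ) (hn : 1 ≤ n)
    (w : Equiv.Perm (Fin n)) (σ : Fin n → ℤ)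
    (hσ : σ ∈ sumDistinctNegRoots n) :
    dotAct w σ ∈ sumDistinctNegRoots n := by
  obtain ⟨m, rfl⟩ : ∃ m, n = m + 1 := ⟨n - 1, by omega⟩
  have hw : w ∈ Submonoid.closure
      (Set.range fun i : Fin m => Equiv.swap i.castSucc i.succ) := by
    rw [Equiv.Perm.mclosure_swap_castSucc_succ]; trivial
  refine Submonoid.closure_induction
    (motive := fun x _ => ∀ τ ∈ sumDistinctNegRoots (m + 1),
      dotAct x τ ∈ sumDistinctNegRoots (m + 1)) ?_ ?_ ?_ hw σ hσ
  · rintro _ ⟨i, rfl⟩ τ hτ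
    exact key_swap i.castSucc i.succ (by simp) τ hτ
  · intro τ hτ
    rw [dotAct_one]; exact hτ
  · intro x y _ _ hx hy τ hτ
    rw [dotAct_mul]; exact hx _ (hy _ hτ)
end

section
/- Fix n ≥ 1 and work in ℤⁿ with Weyl group W = S_n permuting coordinates, ρ = (n−1, n−2, …, 1, 0), dot action w·λ = w(λ+ρ) − ρ, N the set of sums of distinct negative roots −∑_{(i,j)∈S}(ε_i − ε_j) (i < j), and C̄_ℤ = {μ ∈ ℤⁿ : μ_i − μ_{i+1} ≥ −1 for all 1 ≤ i ≤ n−1}. For w ∈ S_n set Ω(w) = {λ ∈ ℤⁿ : λ + w⁻¹(σ) ∈ C̄_ℤ for all σ ∈ N}. Then for every w ∈ S_n one has w·Ω(w) = w(Ω(1)), where the left side uses the dot action and the right side the ordinary permutation action. Consequently Ω := ⋃_{w∈S_n} w·Ω(w) = ⋃_{w∈S_n} w(Ω(1)). -/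
/-- C̄_ℤ = {μ ∈ ℤⁿ : μ_i − μ_{i+1} ≥ −1 for all 1 ≤ i ≤ n−1}. -/
def Cbar (n : ℕ) : Set (Fin n → ℤ) :=
  {μ | ∀ (i : Fin n) (h : (i : ℕ) + 1 < n), μ i - μ ⟨(i : ℕ) + 1, h⟩ ≥ -1}

/-- Ω(w) = {λ ∈ ℤⁿ : λ + w⁻¹(σ) ∈ C̄_ℤ for all σ ∈ N}. -/
def Omega (n : ℕ) (w : Equiv.Perm (Fin n)) : Set (Fin n → ℤ) :=
  {l | ∀ σ ∈ sumDistinctNegRoots n, l + permAct w⁻¹ σ ∈ Cbar n}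

open Finset

lemma neg_sum_coord {n : ℕ} (S : Finset (Fin n × Fin n)) (k : Fin n) :
    (-∑ p ∈ S, (eps p.1 - eps p.2)) k =
      ((S.filter fun p => k = p.2).card : ℤ) - ((S.filter fun p => k = p.1).card : ℤ) := by
  simp only [Pi.neg_apply, Finset.sum_apply, Pi.sub_apply, eps, Pi.single_apply,
    Finset.sum_sub_distrib, Finset.sum_boole]
  ring

lemma filter_fst_subset {n : ℕ} (S : Finset (Fin n × Fin n)) (hS : ∀ p ∈ S, p.1 < p.2)
    (k : Fin n) : (S.filter fun p => k = p.1) ⊆ {k} ×ˢ Ioi k := by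
  intro p hp
  simp only [mem_filter] at hp
  simp only [mem_product, mem_singleton, mem_Ioi]
  exact ⟨hp.2.symm, hp.2 ▸ hS p hp.1⟩

lemma filter_snd_subset {n : ℕ} (S : Finset (Fin n × Fin n)) (hS : ∀ p ∈ S, p.1 < p.2)
    (k : Fin n) : (S.filter fun p => k = p.2) ⊆ Iio k ×ˢ {k} := by
  intro p hp
  simp only [mem_filter] at hp
  simp only [mem_product, mem_singleton, mem_Iio]
  exact ⟨hp.2 ▸ hS p hp.1, hp.2.symm⟩

/-- Bound: for σ ∈ N, σ_a - σ_b ≥ -(n-1-a) - b. -/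
lemma sigma_sub_ge {n : ℕ} (S : Finset (Fin n × Fin n)) (hS : ∀ p ∈ S, p.1 < p.2)
    (a b : Fin n) :
    (-∑ p ∈ S, (eps p.1 - eps p.2)) a - (-∑ p ∈ S, (eps p.1 - eps p.2)) b ≥
      -(((n : ℤ) - 1 - a) + b) := by
  rw [neg_sum_coord, neg_sum_coord]
  have h1 : ((S.filter fun p => a = p.1).card : ℤ) ≤ (n : ℤ) - 1 - a := by
    have := card_le_card (filter_fst_subset S hS a)
    rw [card_product, card_singleton, Fin.card_Ioi, one_mul] at this
    have ha := a.isLt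
    omega
  have h2 : ((S.filter fun p => b = p.2).card : ℤ) ≤ (b : ℤ) := by
    have := card_le_card (filter_snd_subset S hS b)
    rw [card_product, card_singleton, Fin.card_Iio, mul_one] at this
    omega
  have h3 : (0 : ℤ) ≤ ((S.filter fun p => a = p.2).card : ℤ) := Int.natCast_nonneg _
  have h4 : (0 : ℤ) ≤ ((S.filter fun p => b = p.1).card : ℤ) := Int.natCast_nonneg _
  omega

/-- The extremal set achieving the bound. -/
lemma sigma_extremal {n : ℕ} (a b : Fin n) (hab : a ≠ b) :
    ∃ S : Finset (Fin n × Fin n), (∀ p ∈ S, p.1 < p.2) ∧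
      (-∑ p ∈ S, (eps p.1 - eps p.2)) a - (-∑ p ∈ S, (eps p.1 - eps p.2)) b =
        -(((n : ℤ) - 1 - a) + b) := by
  refine ⟨({a} ×ˢ Ioi a) ∪ (Iio b ×ˢ {b}), ?_, ?_⟩
  · intro p hp
    simp only [mem_union, mem_product, mem_singleton, mem_Ioi, mem_Iio] at hp
    rcases hp with ⟨h1, h2⟩ | ⟨h1, h2⟩
    · exact h1 ▸ h2
    · exact h2 ▸ h1
  · rw [neg_sum_coord, neg_sum_coord]
    have e1 : ((({a} ×ˢ Ioi a) ∪ (Iio b ×ˢ {b})).filter fun p => a = p.1) = {a} ×ˢ Ioi a := by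
      ext p
      simp only [mem_filter, mem_union, mem_product, mem_singleton, mem_Ioi, mem_Iio]
      constructor
      · rintro ⟨⟨h1, h2⟩ | ⟨h1, h2⟩, h3⟩
        · exact ⟨h1, h2⟩
        · exact ⟨h3.symm, by rw [← h2] at h1; exact lt_of_eq_of_lt h3 h1⟩
      · rintro ⟨h1, h2⟩; exact ⟨Or.inl ⟨h1, h2⟩, h1.symm⟩
    have e2 : ((({a} ×ˢ Ioi a) ∪ (Iio b ×ˢ {b})).filter fun p => a = p.2) = ∅ := by
      ext p
      simp only [mem_filter, mem_union, mem_product, mem_singleton, mem_Ioi, mem_Iio,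
        notMem_empty, iff_false, not_and]
      rintro (⟨h1, h2⟩ | ⟨h1, h2⟩) h3
      · exact absurd (h3 ▸ h2) (lt_irrefl a)
      · exact hab (h3.trans h2)
    have e3 : ((({a} ×ˢ Ioi a) ∪ (Iio b ×ˢ {b})).filter fun p => b = p.2) = Iio b ×ˢ {b} := by
      ext p
      simp only [mem_filter, mem_union, mem_product, mem_singleton, mem_Ioi, mem_Iio]
      constructor
      · rintro ⟨⟨h1, h2⟩ | ⟨h1, h2⟩, h3⟩
        · exact ⟨by rw [h1, h3]; exact h3 ▸ h2, h3.symm⟩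
        · exact ⟨h1, h2⟩
      · rintro ⟨h1, h2⟩; exact ⟨Or.inr ⟨h1, h2⟩, h2.symm⟩
    have e4 : ((({a} ×ˢ Ioi a) ∪ (Iio b ×ˢ {b})).filter fun p => b = p.1) = ∅ := by
      ext p
      simp only [mem_filter, mem_union, mem_product, mem_singleton, mem_Ioi, mem_Iio,
        notMem_empty, iff_false, not_and]
      rintro (⟨h1, h2⟩ | ⟨h1, h2⟩) h3
      · exact hab (h3.trans h1).symm
      · exact absurd (h3 ▸ h1) (lt_irrefl b)
    rw [e1, e2, e3, e4]
    rw [card_product, card_singleton, Fin.card_Ioi, one_mul,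
      card_product, card_singleton, Fin.card_Iio, mul_one, card_empty]
    have ha := a.isLt
    push_cast
    omega

lemma omega_iff {n : ℕ} (w : Equiv.Perm (Fin n)) (l : Fin n → ℤ) :
    l ∈ Omega n w ↔ ∀ (i : Fin n) (h : (i : ℕ) + 1 < n),
      l i - l ⟨(i : ℕ) + 1, h⟩ ≥
        -1 + (((n : ℤ) - 1 - (w i : ℤ)) + (w ⟨(i : ℕ) + 1, h⟩ : ℤ)) := by
  constructor
  · intro hl i h
    set a := w i
    set b := w ⟨(i : ℕ) + 1, h⟩
    have hab : a ≠ b := by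
      intro hc
      have : i = (⟨(i : ℕ) + 1, h⟩ : Fin n) := w.injective hc
      have := congrArg Fin.val this
      simp at this
    obtain ⟨S, hS, hval⟩ := sigma_extremal a b hab
    have hmem : (-∑ p ∈ S, (eps p.1 - eps p.2)) ∈ sumDistinctNegRoots n := ⟨S, hS, rfl⟩
    have := hl _ hmem i h
    simp only [Pi.add_apply, permAct, inv_inv] at this
    have hge : l i + (-∑ p ∈ S, (eps p.1 - eps p.2)) a -
        (l ⟨(i : ℕ) + 1, h⟩ + (-∑ p ∈ S, (eps p.1 - eps p.2)) b) ≥ -1 := this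
    omega
  · intro hl σ hσ i h
    obtain ⟨S, hS, rfl⟩ := hσ
    have hb := sigma_sub_ge S hS (w i) (w ⟨(i : ℕ) + 1, h⟩)
    have := hl i h
    simp only [Pi.add_apply, permAct, inv_inv]
    omega

lemma mem_omega_shift {n : ℕ} (w : Equiv.Perm (Fin n)) (l : Fin n → ℤ) :
    l ∈ Omega n w ↔ l + rho n - permAct w⁻¹ (rho n) ∈ Omega n 1 := by
  rw [omega_iff, omega_iff]
  refine forall_congr' fun i => forall_congr' fun h => ?_
  simp only [Pi.sub_apply, Pi.add_apply, permAct, inv_inv, rho, Equiv.Perm.one_apply]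
  have h1 := (w i).isLt
  have h2 := (w ⟨(i : ℕ) + 1, h⟩).isLt
  constructor <;> intro <;> push_cast [Fin.val_mk] at * <;> omega

theorem dot_omega_eq_perm_omega_one (n : ℕ) (hn : 1 ≤ n) :
    (∀ w : Equiv.Perm (Fin n), dotAct w '' Omega n w = permAct w '' Omega n 1) ∧
    (⋃ w : Equiv.Perm (Fin n), dotAct w '' Omega n w) =
      ⋃ w : Equiv.Perm (Fin n), permAct w '' Omega n 1 := by
  have key : ∀ w : Equiv.Perm (Fin n), dotAct w '' Omega n w = permAct w '' Omega n 1 := by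
    intro w
    ext μ
    constructor
    · rintro ⟨l, hl, rfl⟩
      refine ⟨l + rho n - permAct w⁻¹ (rho n), (mem_omega_shift w l).1 hl, ?_⟩
      funext k
      simp only [permAct, dotAct, Pi.sub_apply, Pi.add_apply, inv_inv,
        Equiv.Perm.coe_inv, Equiv.apply_symm_apply]
    · rintro ⟨l', hl', rfl⟩
      refine ⟨l' - rho n + permAct w⁻¹ (rho n), ?_, ?_⟩
      · rw [mem_omega_shift w]
        have : l' - rho n + permAct w⁻¹ (rho n) + rho n - permAct w⁻¹ (rho n) = l' := by
          abel
        rw [this]; exact hl'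
      · funext k
        simp only [permAct, dotAct, Pi.sub_apply, Pi.add_apply, inv_inv,
          Equiv.Perm.coe_inv, Equiv.apply_symm_apply]
        ring
  exact ⟨key, Set.iUnion_congr key⟩
end

section
/- Let Φ be a finite reduced crystallographic root system in a finite-dimensional real vector space V, with positive system Φ⁺, Weyl group W, ρ = (1/2)·∑_{α∈Φ⁺} α, and dot action w·v = w(v+ρ) − ρ. Let N ⊆ V be the set of all sums of distinct negative roots, set C̄ = {λ ∈ V : ⟨λ+ρ, α∨⟩ ≥ 0 for all α ∈ Φ⁺}, and for w ∈ W set Ω(w) = {λ ∈ V : λ + w⁻¹(σ) ∈ C̄ for all σ ∈ N}. Then for every w ∈ W one has w·Ω(w) = w(Ω(1)), where the left side uses the dot action and the right side the ordinary linear action of w. -/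
/-!
STATEMENT 4: Let Φ be a finite reduced crystallographic root system in a
finite-dimensional real vector space V, with positive system Φ⁺ (cut out by a
linear functional `f` not vanishing on any root), Weyl group W,
ρ = (1/2)·∑_{α∈Φ⁺} α, and dot action w·v = w(v+ρ) − ρ.  Let N ⊆ V be the set
of all sums of distinct negative roots, set
C̄ = {λ ∈ V : ⟨λ+ρ, α∨⟩ ≥ 0 for all α ∈ Φ⁺}, and for w ∈ W set
Ω(w) = {λ ∈ V : λ + w⁻¹(σ) ∈ C̄ for all σ ∈ N}.  Then for every w ∈ W one has
w·Ω(w) = w(Ω(1)), where the left side uses the dot action and the right side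
the ordinary linear action of w.

The root system is encoded, following Mathlib, as a `RootSystem ι ℝ V V'` with
finitely many roots (`Fintype ι`); positive roots are given by the finite set
`Pos` of their indices, and `P.coroot' i` is the pairing ⟨·, α_i∨⟩ against the
coroot of the root indexed by `i`.
-/

set_option linter.unusedSectionVars false


section Aux

variable {ι V V' : Type*} [Fintype ι]
    [AddCommGroup V] [Module ℝ V]
    [AddCommGroup V'] [Module ℝ V']
    (P : RootPairing ι ℝ V V')
    (f : V →ₗ[ℝ] ℝ) (hf : ∀ i, f (P.root i) ≠ 0)
    (Pos : Finset ι) (hPos : ∀ i, i ∈ Pos ↔ 0 < f (P.root i))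

/-- Index of the negative of a root. -/
local notation "nn" => fun j => P.reflectionPerm j j

lemma root_nn (j : ι) : P.root (P.reflectionPerm j j) = - P.root j := by
  rw [P.root_reflectionPerm, P.reflection_apply_self]

lemma nn_nn (j : ι) : P.reflectionPerm (P.reflectionPerm j j) (P.reflectionPerm j j) = j := by
  apply P.root.injective
  rw [root_nn, root_nn, neg_neg]

include f hf hPos in
lemma nn_mem_iff (j : ι) : (P.reflectionPerm j j) ∈ Pos ↔ j ∉ Pos := by
  rw [hPos, hPos, root_nn, map_neg]
  constructor
  · intro h h'; linarith
  · intro h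
    rcases (hf j).lt_or_gt with h' | h'
    · linarith
    · exact absurd h' h

include f hf hPos in
lemma half_sum (ε : ι → ℝ) (hε : ∀ j, ε (P.reflectionPerm j j) = - ε j) :
    ∑ j, ε j • P.root j = (2:ℝ) • ∑ i ∈ Pos, ε i • P.root i := by
  classical
  have hsplit : ∑ i ∈ Pos, ε i • P.root i + ∑ i ∈ Posᶜ, ε i • P.root i
      = ∑ j, ε j • P.root j := Finset.sum_add_sum_compl Pos _
  have hneg : ∑ i ∈ Posᶜ, ε i • P.root i = ∑ i ∈ Pos, ε i • P.root i := by
    refine Finset.sum_nbij' (fun j => P.reflectionPerm j j) (fun j => P.reflectionPerm j j)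
      ?_ ?_ ?_ ?_ ?_
    · intro a ha
      rw [Finset.mem_compl] at ha
      exact (nn_mem_iff P f hf Pos hPos a).mpr ha
    · intro a ha
      rw [Finset.mem_compl]
      rw [← nn_nn P a] at ha
      exact ((nn_mem_iff P f hf Pos hPos _).mp ha)
    · intro a _; exact nn_nn P a
    · intro a _; exact nn_nn P a
    · intro a _
      rw [hε, root_nn, neg_smul, smul_neg, neg_neg]
  rw [← hsplit, hneg, two_smul]

lemma pos_sum (e : ι → ℝ) (he : ∀ i ∈ Pos, e i = 1 ∨ e i = -1) :
    (2⁻¹:ℝ) • ∑ i ∈ Pos, e i • P.root i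
      = ((2⁻¹:ℝ) • ∑ i ∈ Pos, P.root i) - ∑ i ∈ Pos.filter (fun i => e i = -1), P.root i := by
  classical
  have h1 : ∑ i ∈ Pos, e i • P.root i
      = ∑ i ∈ Pos, P.root i - (2:ℝ) • ∑ i ∈ Pos.filter (fun i => e i = -1), P.root i := by
    rw [← Finset.sum_filter_add_sum_filter_not Pos (fun i => e i = -1) (fun i => e i • P.root i),
      ← Finset.sum_filter_add_sum_filter_not Pos (fun i => e i = -1) (fun i => P.root i)]
    have hA : ∑ i ∈ Pos.filter (fun i => e i = -1), e i • P.root i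
        = - ∑ i ∈ Pos.filter (fun i => e i = -1), P.root i := by
      rw [← Finset.sum_neg_distrib]
      refine Finset.sum_congr rfl fun i hi => ?_
      rw [(Finset.mem_filter.mp hi).2]; simp
    have hB : ∑ i ∈ Pos.filter (fun i => ¬ e i = -1), e i • P.root i
        = ∑ i ∈ Pos.filter (fun i => ¬ e i = -1), P.root i := by
      refine Finset.sum_congr rfl fun i hi => ?_
      rcases Finset.mem_filter.mp hi with ⟨hi1, hi2⟩
      rcases he i hi1 with h | h
      · rw [h, one_smul]
      · exact absurd h hi2
    rw [hA, hB]
    module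
  rw [h1, smul_sub, smul_smul]
  norm_num


variable (ρ : V) (hρ : ρ = (2⁻¹ : ℝ) • ∑ i ∈ Pos, P.root i)
    (N : Set V) (hN : N = {σ : V | ∃ S ⊆ Pos, σ = -∑ i ∈ S, P.root i})

include f hf hPos hρ hN in
lemma mem_N_iff (σ : V) :
    σ ∈ N ↔ ∃ ε : ι → ℝ, (∀ j, ε j = 1 ∨ ε j = -1) ∧
      (∀ j, ε (P.reflectionPerm j j) = - ε j) ∧
      σ + ρ = (4⁻¹:ℝ) • ∑ j, ε j • P.root j := by
  classical
  constructor
  · rintro hσ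
    rw [hN] at hσ
    obtain ⟨S, hS, rfl⟩ := hσ
    set e : ι → ℝ := fun j => if j ∈ S then -1 else 1 with he
    set ε : ι → ℝ := fun j => if j ∈ Pos then e j else - e (P.reflectionPerm j j) with hε
    have hepm : ∀ j, e j = 1 ∨ e j = -1 := by
      intro j; by_cases h : j ∈ S <;> simp [he, h]
    refine ⟨ε, ?_, ?_, ?_⟩
    · intro j
      by_cases h : j ∈ Pos
      · simpa [hε, h] using hepm j
      · rcases hepm (P.reflectionPerm j j) with h' | h' <;> simp [hε, h, h']
    · intro j
      by_cases h : j ∈ Pos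
      · have h2 : (P.reflectionPerm j j) ∉ Pos := by
          intro hc; exact ((nn_mem_iff P f hf Pos hPos j).mp hc) h
        simp [hε, h, h2, nn_nn P j]
      · have h2 : (P.reflectionPerm j j) ∈ Pos := (nn_mem_iff P f hf Pos hPos j).mpr h
        simp [hε, h, h2]
    · have hanti : ∀ j, ε (P.reflectionPerm j j) = - ε j := by
        intro j
        by_cases h : j ∈ Pos
        · have h2 : (P.reflectionPerm j j) ∉ Pos := by
            intro hc; exact ((nn_mem_iff P f hf Pos hPos j).mp hc) h
          simp [hε, h, h2, nn_nn P j]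
        · have h2 : (P.reflectionPerm j j) ∈ Pos := (nn_mem_iff P f hf Pos hPos j).mpr h
          simp [hε, h, h2]
      have hhalf : (4⁻¹:ℝ) • ∑ j, ε j • P.root j = (2⁻¹:ℝ) • ∑ i ∈ Pos, ε i • P.root i := by
        rw [half_sum P f hf Pos hPos ε hanti, smul_smul]
        norm_num
      rw [hhalf]
      have hagree : ∑ i ∈ Pos, ε i • P.root i = ∑ i ∈ Pos, e i • P.root i :=
        Finset.sum_congr rfl fun i hi => by simp [hε, hi]
      rw [hagree, pos_sum P Pos e (fun i _ => hepm i)]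
      have hfiltr : Pos.filter (fun i => e i = -1) = S := by
        ext i
        simp only [Finset.mem_filter, he]
        constructor
        · rintro ⟨_, h2⟩
          by_contra hc
          simp [hc] at h2
          norm_num at h2
        · intro hi
          exact ⟨hS hi, by simp [hi]⟩
      rw [hfiltr, hρ]
      abel
  · rintro ⟨ε, hpm, hanti, hval⟩
    rw [hN]
    refine ⟨Pos.filter (fun i => ε i = -1), Finset.filter_subset _ _, ?_⟩
    have : σ + ρ = (2⁻¹:ℝ) • ∑ i ∈ Pos, ε i • P.root i := by
      rw [hval, half_sum P f hf Pos hPos ε hanti, smul_smul]; norm_num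
    rw [pos_sum P Pos ε (fun i _ => hpm i), ← hρ] at this
    have := congrArg (fun x => x - ρ) this
    simpa using this

lemma exists_root_of_mem_closure (u : V ≃ₗ[ℝ] V)
    (hu : u ∈ Subgroup.closure (Set.range P.reflection)) (i : ι) :
    ∃ j, P.root j = u (P.root i) := by
  induction hu using Subgroup.closure_induction'' generalizing i with
  | mem x hx =>
    obtain ⟨k, rfl⟩ := hx
    exact ⟨P.reflectionPerm k i, P.root_reflectionPerm k i⟩
  | inv_mem x hx =>
    obtain ⟨k, rfl⟩ := hx
    exact ⟨P.reflectionPerm k i, by rw [P.reflection_inv]; exact P.root_reflectionPerm k i⟩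
  | one => exact ⟨i, rfl⟩
  | mul x y _ _ hx hy =>
    obtain ⟨j, hj⟩ := hy i
    obtain ⟨k, hk⟩ := hx j
    exact ⟨k, by rw [hk, hj]; rfl⟩

include f hf hPos hρ hN in
lemma weyl_N (u : V ≃ₗ[ℝ] V) (hu : u ∈ Subgroup.closure (Set.range P.reflection)) (σ : V) (hσ : σ ∈ N) :
    u (σ + ρ) - ρ ∈ N := by
  classical
  obtain ⟨ε, hpm, hanti, hval⟩ := (mem_N_iff P f hf Pos hPos ρ hρ N hN σ).mp hσ
  set g0 : ι → ι := fun i => (exists_root_of_mem_closure P u hu i).choose with hg0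
  have hg0spec : ∀ i, P.root (g0 i) = u (P.root i) := fun i =>
    (exists_root_of_mem_closure P u hu i).choose_spec
  have hg0inj : Function.Injective g0 := by
    intro a b hab
    apply P.root.injective
    apply u.injective
    rw [← hg0spec a, ← hg0spec b, hab]
  set g : ι ≃ ι := Equiv.ofBijective g0 (Finite.injective_iff_bijective.mp hg0inj) with hg
  have hgapp : ∀ i, P.root (g i) = u (P.root i) := hg0spec
  have hgn : ∀ j, g (P.reflectionPerm j j) = P.reflectionPerm (g j) (g j) := by
    intro j
    apply P.root.injective
    rw [hgapp, root_nn, root_nn, map_neg, hgapp]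
  have hgsymn : ∀ j, g.symm (P.reflectionPerm j j) = P.reflectionPerm (g.symm j) (g.symm j) := by
    intro j
    apply g.injective
    rw [Equiv.apply_symm_apply, hgn, Equiv.apply_symm_apply]
  rw [mem_N_iff P f hf Pos hPos ρ hρ N hN]
  refine ⟨fun j => ε (g.symm j), fun j => hpm _, fun j => by
    show ε (g.symm (P.reflectionPerm j j)) = - ε (g.symm j)
    rw [hgsymn, hanti], ?_⟩
  have : u (σ + ρ) = (4⁻¹:ℝ) • ∑ j, ε (g.symm j) • P.root j := by
    rw [hval, map_smul, map_sum]
    congr 1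
    rw [← Equiv.sum_comp g (fun j => ε (g.symm j) • P.root j)]
    refine Finset.sum_congr rfl fun i _ => ?_
    rw [Equiv.symm_apply_apply, hgapp, map_smul]
  rw [sub_add_cancel, this]

end Aux


theorem dot_omega_eq_weyl_translate_omega_one
    {ι V V' : Type*} [Fintype ι]
    [AddCommGroup V] [Module ℝ V] [FiniteDimensional ℝ V]
    [AddCommGroup V'] [Module ℝ V']
    (P : RootPairing ι ℝ V V') (hspan : Submodule.span ℝ (Set.range P.root) = ⊤)
    (hcrys : P.IsCrystallographic)
    (hred : P.IsReduced)
    -- `Pos` is a positive system: the roots on which a fixed regular linear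
    -- functional `f` (nonvanishing on all roots) is positive
    (f : V →ₗ[ℝ] ℝ) (hf : ∀ i, f (P.root i) ≠ 0)
    (Pos : Finset ι) (hPos : ∀ i, i ∈ Pos ↔ 0 < f (P.root i))
    -- ρ is the half-sum of the positive roots
    (ρ : V) (hρ : ρ = (2⁻¹ : ℝ) • ∑ i ∈ Pos, P.root i)
    -- N is the set of sums of distinct negative roots
    (N : Set V) (hN : N = {σ : V | ∃ S ⊆ Pos, σ = -∑ i ∈ S, P.root i})
    -- C̄ = {λ : ⟨λ+ρ, α∨⟩ ≥ 0 for all α ∈ Φ⁺}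
    (C : Set V) (hC : C = {l : V | ∀ i ∈ Pos, 0 ≤ P.coroot' i (l + ρ)})
    -- Ω(u) = {λ : λ + u⁻¹(σ) ∈ C̄ for all σ ∈ N}
    (Ω : (V ≃ₗ[ℝ] V) → Set V)
    (hΩ : ∀ u : V ≃ₗ[ℝ] V, Ω u = {l : V | ∀ σ ∈ N, l + u⁻¹ σ ∈ C})
    -- w is an element of the Weyl group
    (w : V ≃ₗ[ℝ] V) (hw : w ∈ Subgroup.closure (Set.range P.reflection)) :
    -- then w·Ω(w) = w(Ω(1))
    (fun v => w (v + ρ) - ρ) '' Ω w = (fun v => w v) '' Ω 1 := by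
  have hw' : w⁻¹ ∈ Subgroup.closure (Set.range P.reflection) := Subgroup.inv_mem _ hw
  have hK := weyl_N P f hf Pos hPos ρ hρ N hN
  have hsymm : ∀ x, (w⁻¹ : V ≃ₗ[ℝ] V) x = w.symm x := fun _ => rfl
  have hone : ∀ x : V, ((1 : V ≃ₗ[ℝ] V)⁻¹) x = x := fun _ => rfl
  ext x
  simp only [Set.mem_image, hΩ, Set.mem_setOf_eq]
  constructor
  · rintro ⟨l, hl, rfl⟩
    refine ⟨l + ρ - w⁻¹ ρ, fun σ hσ => ?_, ?_⟩
    · have h1 := hl _ (hK w hw σ hσ)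
      have h2 : l + w⁻¹ (w (σ + ρ) - ρ) = l + ρ - w⁻¹ ρ + ((1 : V ≃ₗ[ℝ] V)⁻¹) σ := by
        rw [hone, hsymm, map_sub, w.symm_apply_apply, ← hsymm]
        abel
      rwa [h2] at h1
    · show w (l + ρ - w⁻¹ ρ) = w (l + ρ) - ρ
      rw [map_sub, hsymm, w.apply_symm_apply]
  · rintro ⟨m, hm, rfl⟩
    refine ⟨m - ρ + w⁻¹ ρ, fun σ' hσ' => ?_, ?_⟩
    · have h1 := hm _ (hK w⁻¹ hw' σ' hσ')
      rw [hone] at h1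
      have h2 : m - ρ + w⁻¹ ρ + w⁻¹ σ' = m + (w⁻¹ (σ' + ρ) - ρ) := by
        rw [map_add]; abel
      rwa [h2]
    · show w (m - ρ + w⁻¹ ρ + ρ) - ρ = w m
      rw [show m - ρ + w⁻¹ ρ + ρ = m + w⁻¹ ρ by abel, map_add, hsymm, w.apply_symm_apply]
      abel
end
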